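/- Let C be a symmetric monoidal closed category, let i : D ⥤ C be a fully faithful functor admitting a left adjoint L : C ⥤ D (so D is a reflective subcategory of C), and let η denote the unit of the adjunction L ⊣ i. Then the essential image of i is an exponential ideal (i.e., for every object Y of C and every object Z of D, the internal hom [Y, i(Z)] lies in the essential image of i) if and only if for all objects Y, Z of C the morphism L(η_Y ⊗ η_Z) : L(Y ⊗ Z) → L(i(L(Y)) ⊗ i(L(Z))) is an isomorphism. -/

import Mathlib

open CategoryTheory MonoidalCategory MonoidalClosed

private lemma conj_bij {α β γ δ : Type*} (e1 : α ≃ γ) (e2 : β ≃ δ)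
    (f : α → β) (g : γ → δ) (h : ∀ a, e2 (f a) = g (e1 a)) :
    Function.Bijective f ↔ Function.Bijective g := by
  have hg : g = fun c => e2 (f (e1.symm c)) := by
    funext c
    rw [h (e1.symm c), e1.apply_symm_apply]
  have hf : f = fun a => e2.symm (g (e1 a)) := by
    funext a; rw [← h a, e2.symm_apply_apply]
  constructor
  · intro hfb; rw [hg]
    exact e2.bijective.comp (hfb.comp e1.symm.bijective)
  · intro hgb; rw [hf]
    exact e2.symm.bijective.comp (hgb.comp e1.bijective)

/-- A morphism is inverted by the reflector `L` iff precomposition with it is bijective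
on maps into objects of the form `i.obj W`. -/
private lemma localiso_iff {C D : Type*} [Category C] [Category D]
    (i : D ⥤ C) (L : C ⥤ D) (adj : L ⊣ i) {X Y : C} (f : X ⟶ Y) :
    IsIso (L.map f) ↔
      ∀ W : D, Function.Bijective (fun g : Y ⟶ i.obj W => f ≫ g) := by
  rw [isIso_iff_coyoneda_map_bijective]
  exact forall_congr' fun W =>
    conj_bij (adj.homEquiv Y W) (adj.homEquiv X W) _ _
      (fun a => adj.homEquiv_naturality_left f a)

private lemma bij_precomp {C D : Type*} [Category C] [Category D]
    (i : D ⥤ C) (L : C ⥤ D) (adj : L ⊣ i) {X Y : C} (f : X ⟶ Y)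
    (hf : IsIso (L.map f)) {E : C} (hE : i.essImage E) :
    Function.Bijective (fun g : Y ⟶ E => f ≫ g) := by
  obtain ⟨W, ⟨e⟩⟩ := hE
  exact (conj_bij ((Iso.refl Y).homCongr e) ((Iso.refl X).homCongr e) _ _
    (fun a => by simp)).mp ((localiso_iff i L adj f).mp hf W)

/-- If the essential image is an exponential ideal, whiskering an `L`-inverted map
on the left stays `L`-inverted. -/
private lemma whiskerLeft_L_iso {C D : Type*} [Category C] [Category D]
    [MonoidalCategory C] [MonoidalClosed C]
    (i : D ⥤ C) (L : C ⥤ D) (adj : L ⊣ i)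
    (H : ∀ (Y : C) (Z : D), i.essImage ((ihom Y).obj (i.obj Z)))
    (A : C) {X Y : C} (f : X ⟶ Y) (hf : IsIso (L.map f)) :
    IsIso (L.map (A ◁ f)) := by
  rw [localiso_iff i L adj]
  intro W
  refine (conj_bij ((ihom.adjunction A).homEquiv Y (i.obj W))
      ((ihom.adjunction A).homEquiv X (i.obj W)) _ _ ?_).mpr
    (bij_precomp i L adj f hf (H A W))
  intro a
  simpa using (ihom.adjunction A).homEquiv_naturality_left f a

/-- **Exponential ideals and monoidal products.**
Let `C` be a symmetric monoidal closed category, `i : D ⥤ C` a fully faithful functor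
with left adjoint `L : C ⥤ D` (so `D` is reflective in `C`), with unit `η`.  The essential
image of `i` is an exponential ideal (closed under internal homs `[Y, i Z]` for all `Y : C`,
`Z : D`) if and only if `L (η_Y ⊗ η_Z) : L (Y ⊗ Z) → L (i (L Y) ⊗ i (L Z))` is an
isomorphism for all `Y Z : C`. -/
theorem exponential_ideal_iff_unit_tensor_unit_localizes
    {C D : Type*} [Category C] [Category D]
    [MonoidalCategory C] [SymmetricCategory C] [MonoidalClosed C]
    (i : D ⥤ C) [i.Full] [i.Faithful] (L : C ⥤ D) (adj : L ⊣ i) :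
    (∀ (Y : C) (Z : D), i.essImage ((ihom Y).obj (i.obj Z))) ↔
      ∀ Y Z : C,
        IsIso (L.map (MonoidalCategory.tensorHom (adj.unit.app Y) (adj.unit.app Z))) := by
  constructor
  · intro H Y Z
    have h1 : IsIso (L.map ((i.obj (L.obj Y)) ◁ adj.unit.app Z)) :=
      whiskerLeft_L_iso i L adj H _ _ inferInstance
    have h2 : IsIso (L.map (adj.unit.app Y ▷ Z)) := by
      have h3 : IsIso (L.map (Z ◁ adj.unit.app Y)) :=
        whiskerLeft_L_iso i L adj H _ _ inferInstance
      have heq : adj.unit.app Y ▷ Z =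
          (β_ Y Z).hom ≫ (Z ◁ adj.unit.app Y) ≫ (β_ ((L ⋙ i).obj Y) Z).inv := by
        rw [← Category.assoc, ← BraidedCategory.braiding_naturality_left,
          Category.assoc, Iso.hom_inv_id, Category.comp_id]
      rw [heq, L.map_comp, L.map_comp]
      infer_instance
    rw [MonoidalCategory.tensorHom_def, L.map_comp]
    simp only [Functor.comp_obj, Functor.id_obj] at h1 h2 ⊢
    infer_instance
  · intro H2 Y Z
    -- it suffices to show that the unit at `E := [Y, i Z]` is an isomorphism
    set E := (ihom Y).obj (i.obj Z) with hE
    have hwr : ∀ B : C, IsIso (L.map (adj.unit.app Y ▷ i.obj (L.obj B))) := by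
      intro B
      have h0 := H2 Y (i.obj (L.obj B))
      rw [MonoidalCategory.tensorHom_def, L.map_comp] at h0
      simp only [Functor.comp_obj, Functor.id_obj] at h0
      have hiso : IsIso (L.map (i.obj (L.obj Y) ◁ adj.unit.app (i.obj (L.obj B)))) := by
        have : IsIso (adj.unit.app (i.obj (L.obj B))) := inferInstance
        infer_instance
      exact IsIso.of_isIso_comp_right _
        (L.map (i.obj (L.obj Y) ◁ adj.unit.app (i.obj (L.obj B))))
    have hwl : ∀ B : C, IsIso (L.map (Y ◁ adj.unit.app B)) := by
      intro B
      have h0 := H2 Y B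
      rw [MonoidalCategory.tensorHom_def', L.map_comp] at h0
      simp only [Functor.comp_obj, Functor.id_obj] at h0
      have := hwr B
      exact IsIso.of_isIso_comp_right _ (L.map (adj.unit.app Y ▷ i.obj (L.obj B)))
    have hbij : ∀ B : C, Function.Bijective
        (fun g : i.obj (L.obj B) ⟶ E => adj.unit.app B ≫ g) := by
      intro B
      refine (conj_bij ((ihom.adjunction Y).homEquiv (i.obj (L.obj B)) (i.obj Z)).symm
          ((ihom.adjunction Y).homEquiv B (i.obj Z)).symm _ _ ?_).mpr
        ((localiso_iff i L adj _).mp (hwl B) Z)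
      intro a
      simpa using (ihom.adjunction Y).homEquiv_naturality_left_symm (adj.unit.app B) a
    obtain ⟨g, hg⟩ := (hbij E).2 (𝟙 E)
    have hg' : adj.unit.app E ≫ g = 𝟙 E := hg
    have hsec : g ≫ adj.unit.app E = 𝟙 _ := by
      apply ((localiso_iff i L adj (adj.unit.app E)).mp inferInstance (L.obj E)).1
      show adj.unit.app E ≫ (g ≫ adj.unit.app E) = adj.unit.app E ≫ 𝟙 _
      rw [← Category.assoc, hg']; simp
    have : IsIso (adj.unit.app E) := ⟨g, hg', hsec⟩
    exact ⟨L.obj E, ⟨(asIso (adj.unit.app E)).symm⟩⟩
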